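/- Explicit solution of the fluid-limit differential inclusion and its long-run limit: let λ > 0, θ ≥ 0, and let y₀ be a real with 0 ≤ y₀ ≤ θ. Define y(t) = min(λ + (y₀ − λ)·e^{−t}, θ) for t ≥ 0. Then y(0) = y₀, y is Lipschitz on [0,∞), for almost every t ≥ 0 the function y is differentiable at t with derivative lying in H(y(t)), and y(t) → min(λ, θ) as t → ∞. -/

import Mathlib

open scoped Classical

/-- The set-valued fluid-limit drift map: `H(y) = {λ − y}` for `y < θ`,
`H(θ) = [−θ, λ − θ]`, and `H(y) = {−y}` for `y > θ`. -/
noncomputable def Hmap (lam θ : ℝ) : ℝ → Set ℝ := fun y =>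
  if y < θ then {lam - y} else if y = θ then Set.Icc (-θ) (lam - θ) else {-y}

open MeasureTheory

/-- explicit solution of the fluid-limit differential inclusion and its
long-run limit: for `0 ≤ y₀ ≤ θ`, the function `y(t) = min(λ + (y₀ − λ)e^{−t}, θ)` starts
at `y₀`, is Lipschitz on `[0,∞)`, solves `y' ∈ H(y)` almost everywhere on `[0,∞)`, and
converges to `min(λ, θ)` as `t → ∞`. -/
theorem fluid_limit_solution (lam θ : ℝ) (hlam : 0 < lam) (hθ : 0 ≤ θ)
    (y₀ : ℝ) (hy₀0 : 0 ≤ y₀) (hy₀θ : y₀ ≤ θ)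
    (y : ℝ → ℝ) (hy : ∀ t, y t = min (lam + (y₀ - lam) * Real.exp (-t)) θ) :
    y 0 = y₀ ∧
    (∃ K : NNReal, LipschitzOnWith K y (Set.Ici 0)) ∧
    (∀ᵐ t ∂(volume.restrict (Set.Ici (0 : ℝ))), ∃ z ∈ Hmap lam θ (y t), HasDerivAt y z t) ∧
    Filter.Tendsto y Filter.atTop (nhds (min lam θ)) := by
  have hyf : y = fun t => min (lam + (y₀ - lam) * Real.exp (-t)) θ := funext hy
  subst hyf
  set f : ℝ → ℝ := fun t => lam + (y₀ - lam) * Real.exp (-t) with hf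
  have hHθ : Hmap lam θ θ = Set.Icc (-θ) (lam - θ) := by simp [Hmap]
  have hcont : Continuous f := by
    apply Continuous.add continuous_const
    exact continuous_const.mul (Real.continuous_exp.comp continuous_neg)
  have hderiv : ∀ t : ℝ, HasDerivAt f (lam - f t) t := by
    intro t
    have h1 : HasDerivAt (fun t : ℝ => Real.exp (-t)) (-Real.exp (-t)) t := by
      simpa [Function.comp_def] using (Real.hasDerivAt_exp (-t)).comp t (hasDerivAt_neg t)
    have h2 := ((h1.const_mul (y₀ - lam)).const_add lam)
    refine h2.congr_deriv ?_
    simp only [hf]; ring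
  refine ⟨?_, ?_, ?_, ?_⟩
  · show min (lam + (y₀ - lam) * Real.exp (-0)) θ = y₀
    rw [neg_zero, Real.exp_zero, mul_one, show lam + (y₀ - lam) = y₀ by ring]
    exact min_eq_left hy₀θ
  · refine ⟨1 * ‖y₀ - lam‖₊, ?_⟩
    have hlip : LipschitzOnWith ‖y₀ - lam‖₊ f (Set.Ici 0) := by
      apply (convex_Ici 0).lipschitzOnWith_of_nnnorm_hasDerivWithin_le
        (f' := fun t => lam - f t) (fun x _ => (hderiv x).hasDerivWithinAt)
      intro x hx
      have heq : lam - f x = -((y₀ - lam) * Real.exp (-x)) := by simp only [hf]; ring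
      rw [← NNReal.coe_le_coe]
      simp only [coe_nnnorm, heq, norm_neg, norm_mul, Real.norm_eq_abs]
      have h1 : Real.exp (-x) ≤ 1 := Real.exp_le_one_iff.2 (by simpa using hx)
      calc |y₀ - lam| * |Real.exp (-x)| ≤ |y₀ - lam| * 1 := by
            apply mul_le_mul_of_nonneg_left _ (abs_nonneg _)
            rw [abs_of_pos (Real.exp_pos _)]; exact h1
        _ = |y₀ - lam| := mul_one _
    exact (LipschitzWith.id.min_const θ).comp_lipschitzOnWith hlip
  · rcases eq_or_ne y₀ lam with hcase | hcase
    · -- constant case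
      have hconst : (fun t => min (f t) θ) = fun _ : ℝ => lam := by
        funext s; simp [hf, hcase, min_eq_left (hcase ▸ hy₀θ)]
      refine Filter.Eventually.of_forall fun t => ⟨0, ?_, ?_⟩
      · have hyt : min (f t) θ = lam := congrFun hconst t
        show (0:ℝ) ∈ Hmap lam θ (min (f t) θ)
        rw [hyt]
        rcases lt_or_eq_of_le (hcase ▸ hy₀θ) with h | h
        · simp [Hmap, h]
        · rw [h] at hHθ ⊢
          rw [hHθ]
          exact ⟨by linarith, by linarith⟩
      · show HasDerivAt (fun t => min (f t) θ) 0 t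
        rw [hconst]; exact hasDerivAt_const t lam
    · -- f injective: {f = θ} is a subsingleton, hence null
      have hnull : volume {t : ℝ | f t = θ} = 0 := by
        apply Set.Subsingleton.measure_zero
        intro a ha b hb
        simp only [Set.mem_setOf_eq, hf] at ha hb
        have hne : y₀ - lam ≠ 0 := sub_ne_zero.2 hcase
        have hexp : Real.exp (-a) = Real.exp (-b) :=
          mul_left_cancel₀ hne (by linarith)
        have := Real.exp_injective hexp
        linarith [neg_injective this]
      have h1 : ∀ᵐ t ∂(volume.restrict (Set.Ici (0:ℝ))), f t ≠ θ := by
        refine ae_restrict_of_ae ?_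
        rw [ae_iff]
        simpa using hnull
      have h2 : ∀ᵐ t ∂(volume.restrict (Set.Ici (0:ℝ))), t ∈ Set.Ici (0:ℝ) :=
        ae_restrict_mem measurableSet_Ici
      filter_upwards [h1, h2] with t hne ht
      rcases lt_or_gt_of_ne hne with hlt | hgt
      · -- f t < θ
        refine ⟨lam - f t, ?_, ?_⟩
        · show (lam - f t) ∈ Hmap lam θ (min (f t) θ)
          rw [min_eq_left hlt.le]
          simp [Hmap, hlt]
        · have hev : (fun s => min (f s) θ) =ᶠ[nhds t] f := by
            filter_upwards [(hcont.continuousAt (x := t)).eventually_lt continuousAt_const hlt]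
              with s hs using min_eq_left hs.le
          exact (hderiv t).congr_of_eventuallyEq hev
      · -- f t > θ
        have hθlam : θ < lam := by
          by_contra h
          push_neg at h
          have h1' : Real.exp (-t) ≤ 1 := Real.exp_le_one_iff.2 (by simpa using ht)
          have hft : f t ≤ θ := by
            rcases le_or_gt y₀ lam with h2 | h2
            · have : (y₀ - lam) * Real.exp (-t) ≤ 0 :=
                mul_nonpos_of_nonpos_of_nonneg (by linarith) (Real.exp_pos _).le
              simp only [hf]; linarith
            · have : (y₀ - lam) * Real.exp (-t) ≤ (y₀ - lam) * 1 :=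
                mul_le_mul_of_nonneg_left h1' (by linarith)
              simp only [hf]; nlinarith
          linarith
        refine ⟨0, ?_, ?_⟩
        · show (0:ℝ) ∈ Hmap lam θ (min (f t) θ)
          rw [min_eq_right hgt.le, hHθ]
          exact ⟨by linarith, by linarith⟩
        · have hev : (fun s => min (f s) θ) =ᶠ[nhds t] (fun _ => θ) := by
            filter_upwards [continuousAt_const.eventually_lt (hcont.continuousAt (x := t)) hgt]
              with s hs using min_eq_right hs.le
          exact (hasDerivAt_const t θ).congr_of_eventuallyEq hev
  · have hfl : Filter.Tendsto f Filter.atTop (nhds lam) := by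
      have hexp : Filter.Tendsto (fun t : ℝ => Real.exp (-t)) Filter.atTop (nhds 0) := by
        simpa using Real.tendsto_exp_neg_atTop_nhds_zero
      simpa using (hexp.const_mul (y₀ - lam)).const_add lam
    exact hfl.min tendsto_const_nhds
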